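/- arXiv:2211.13151 — 4 statements merged into one kernel-verified Lean document; each statement's English description precedes it below -/
import Mathlib

section
/- Let A = ⊕_{i=0}^n A_i be a graded commutative ring and suppose x ∈ A_k and y ∈ A_l induce periodicity (in the sense that multiplication by the element is injective A_i → A_{i+deg} for 0 < i ≤ n−deg and surjective for 0 ≤ i < n−deg), with k, l ≤ n/2. Then there exists an element of degree gcd(k, l) that induces periodicity. -/
/-- An element `x ∈ 𝒜 k` of a graded commutative ring (graded by degrees `0, …, n`)
induces periodicity: `k ≤ n/2`, multiplication by `x` is injective `A_i → A_{i+k}` for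
`0 < i ≤ n - k` and surjective for `0 ≤ i < n - k`. -/
def InducesPeriodicity {A : Type*} [CommRing A] (𝒜 : ℕ → AddSubgroup A)
    (n k : ℕ) (x : A) : Prop :=
  x ∈ 𝒜 k ∧ 2 * k ≤ n ∧
    (∀ i, 0 < i → i + k ≤ n → ∀ u ∈ 𝒜 i, ∀ v ∈ 𝒜 i, x * u = x * v → u = v) ∧
    (∀ i, i + k < n → ∀ c ∈ 𝒜 (i + k), ∃ u ∈ 𝒜 i, x * u = c)

/-- Euclidean step: if `x ∈ 𝒜 k` and `y ∈ 𝒜 l` induce periodicity and `l < k`, then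
`x = y * z` for some `z ∈ 𝒜 (k - l)`, and `z` induces periodicity. -/
lemma step_aux {A : Type*} [CommRing A] (𝒜 : ℕ → AddSubgroup A) [GradedRing 𝒜]
    (n k l : ℕ) (x y : A)
    (hx : InducesPeriodicity 𝒜 n k x) (hy : InducesPeriodicity 𝒜 n l y) (hlk : l < k) :
    ∃ z : A, InducesPeriodicity 𝒜 n (k - l) z := by
  obtain ⟨hxk, hk2, hxinj, hxsurj⟩ := hx
  obtain ⟨hyl, hl2, hyinj, hysurj⟩ := hy
  have hkn : k < n := by omega
  obtain ⟨z, hz, hzx⟩ := hysurj (k - l) (by omega) x (by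
    rw [show k - l + l = k by omega]; exact hxk)
  refine ⟨z, hz, by omega, ?_, ?_⟩
  · -- injectivity
    intro i hi0 hin u hu v hv huv
    by_cases h : i + k ≤ n
    · apply hxinj i hi0 h u hu v hv
      rw [← hzx, mul_assoc, mul_assoc, huv]
    · have hil : l < i := by omega
      obtain ⟨u', hu', hyu'⟩ := hysurj (i - l) (by omega) u (by
        rw [show i - l + l = i by omega]; exact hu)
      obtain ⟨v', hv', hyv'⟩ := hysurj (i - l) (by omega) v (by
        rw [show i - l + l = i by omega]; exact hv)
      have hxx : x * u' = x * v' := by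
        calc x * u' = z * (y * u') := by rw [← hzx]; ring
        _ = z * u := by rw [hyu']
        _ = z * v := huv
        _ = z * (y * v') := by rw [hyv']
        _ = x * v' := by rw [← hzx]; ring
      have heq := hxinj (i - l) (by omega) (by omega) u' hu' v' hv' hxx
      rw [← hyu', ← hyv', heq]
  · -- surjectivity
    intro i hin c hc
    by_cases h : l ≤ i
    · obtain ⟨u', hu', hxu'⟩ := hxsurj (i - l) (by omega) c (by
        rw [show i - l + k = i + (k - l) by omega]; exact hc)
      refine ⟨y * u', ?_, ?_⟩
      · have := SetLike.mul_mem_graded hyl hu'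
        rwa [show l + (i - l) = i by omega] at this
      · rw [← hxu', ← hzx]; ring
    · have hikn : i + k < n := by omega
      obtain ⟨u, hu, hxu⟩ := hxsurj i hikn (y * c) (by
        have := SetLike.mul_mem_graded hyl hc
        rwa [show l + (i + (k - l)) = i + k by omega] at this)
      refine ⟨u, hu, ?_⟩
      apply hyinj (i + (k - l)) (by omega) (by omega) (z * u)
        (by have := SetLike.mul_mem_graded hz hu
            rwa [show k - l + i = i + (k - l) by omega] at this) c hc
      calc y * (z * u) = x * u := by rw [← hzx]; ring
      _ = y * c := hxu

lemma gcd_aux {A : Type*} [CommRing A] (𝒜 : ℕ → AddSubgroup A) [GradedRing 𝒜]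
    (n : ℕ) : ∀ m k l : ℕ, ∀ x y : A, k + l ≤ m →
    InducesPeriodicity 𝒜 n k x → InducesPeriodicity 𝒜 n l y →
    ∃ w : A, InducesPeriodicity 𝒜 n (Nat.gcd k l) w := by
  intro m
  induction m with
  | zero =>
    intro k l x y h hx hy
    obtain ⟨rfl, rfl⟩ : k = 0 ∧ l = 0 := by omega
    exact ⟨x, hx⟩
  | succ m ih =>
    intro k l x y h hx hy
    rcases Nat.lt_trichotomy k l with hkl | hkl | hkl
    · rcases Nat.eq_zero_or_pos k with rfl | hk0
      · rw [Nat.gcd_zero_left]; exact ⟨y, hy⟩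
      · obtain ⟨z, hz⟩ := step_aux 𝒜 n l k y x hy hx hkl
        obtain ⟨w, hw⟩ := ih k (l - k) x z (by omega) hx hz
        rw [Nat.gcd_sub_self_right hkl.le] at hw
        exact ⟨w, hw⟩
    · subst hkl; rw [Nat.gcd_self]; exact ⟨x, hx⟩
    · rcases Nat.eq_zero_or_pos l with rfl | hl0
      · rw [Nat.gcd_zero_right]; exact ⟨x, hx⟩
      · obtain ⟨z, hz⟩ := step_aux 𝒜 n k l x y hx hy hkl
        obtain ⟨w, hw⟩ := ih (k - l) l z y (by omega) hz hy
        rw [Nat.gcd_comm, Nat.gcd_sub_self_right hkl.le, Nat.gcd_comm] at hw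
        exact ⟨w, hw⟩

/-- if `x ∈ A_k` and `y ∈ A_l` induce periodicity, there is an element of
degree `gcd(k, l)` inducing periodicity. -/
theorem stmt1 {A : Type*} [CommRing A] (𝒜 : ℕ → AddSubgroup A) [GradedRing 𝒜]
    (n : ℕ) (htop : ∀ i, n < i → 𝒜 i = ⊥)
    (k l : ℕ) (x y : A)
    (hx : InducesPeriodicity 𝒜 n k x) (hy : InducesPeriodicity 𝒜 n l y) :
    ∃ w : A, InducesPeriodicity 𝒜 n (Nat.gcd k l) w := by
  exact gcd_aux 𝒜 n (k + l) k l x y le_rfl hx hy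
end

section
/- Let p be a prime, l ≥ 0, and let k_1, …, k_s be natural numbers with sum r. If p^l divides r but p^l does not divide k_j for some j, then the multinomial coefficient r! / (k_1! ⋯ k_s!) is divisible by p. -/
lemma aux_dvd_choose (p : ℕ) (hp : p.Prime) (l r a : ℕ) (ha : a ≤ r)
    (hr : p ^ l ∣ r) (hj : ¬ p ^ l ∣ a) : p ∣ r.choose a := by
  have ha0 : a ≠ 0 := by rintro rfl; exact hj (dvd_zero _)
  have hr0 : r ≠ 0 := by rintro rfl; omega
  have hC : r.choose a ≠ 0 := (Nat.choose_pos ha).ne'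
  obtain ⟨a', rfl⟩ := Nat.exists_eq_succ_of_ne_zero ha0
  obtain ⟨r', rfl⟩ := Nat.exists_eq_succ_of_ne_zero hr0
  have hid : (a' + 1) * (r' + 1).choose (a' + 1) = (r' + 1) * r'.choose a' := by
    rw [mul_comm ((a':ℕ)+1), Nat.add_one_mul_choose_eq]
  have hdvd : p ^ l ∣ (a' + 1) * (r' + 1).choose (a' + 1) := by
    rw [hid]; exact Dvd.dvd.mul_right hr _
  rw [hp.pow_dvd_iff_le_factorization (by positivity)] at hdvd
  rw [Nat.factorization_mul (by omega) (by simpa using hC)] at hdvd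
  simp only [Finsupp.add_apply] at hdvd
  have hlt : (a' + 1).factorization p < l := by
    by_contra h
    exact hj ((hp.pow_dvd_iff_le_factorization (by omega)).mpr
      (by simpa using Nat.le_of_not_lt h))
  have h1 : 1 ≤ ((r' + 1).choose (a' + 1)).factorization p := by omega
  have := (hp.pow_dvd_iff_le_factorization (by simpa using hC)).mpr h1
  simpa using this

/-- if `p^l` divides `r = ∑ k_i` but not some `k_j`, then `p` divides the
multinomial coefficient `r! / (k_1! ⋯ k_s!)`. -/
theorem stmt7 (p : ℕ) (hp : p.Prime) (l : ℕ) {s : ℕ} (k : Fin s → ℕ)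
    (hr : p ^ l ∣ ∑ i, k i) (j : Fin s) (hj : ¬ p ^ l ∣ k j) :
    p ∣ Nat.multinomial Finset.univ k := by
  have h1 : Nat.multinomial Finset.univ k
      = (k j + ∑ i ∈ Finset.univ.erase j, k i).choose (k j)
        * Nat.multinomial (Finset.univ.erase j) k := by
    rw [← Nat.multinomial_insert (Finset.notMem_erase j _),
      Finset.insert_erase (Finset.mem_univ j)]
  have h2 : k j + ∑ i ∈ Finset.univ.erase j, k i = ∑ i, k i := by
    rw [Finset.add_sum_erase _ _ (Finset.mem_univ j)]
  rw [h1, h2]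
  exact Dvd.dvd.mul_right
    (aux_dvd_choose p hp l _ _ (Finset.single_le_sum (fun _ _ => Nat.zero_le _)
      (Finset.mem_univ j)) hr hj) _
end

section
/- Let p be a prime, l ≥ 0 and 1 ≤ λ ≤ p−1. Then the multinomial coefficient (λ p^l)! / ((p^l)!)^λ is congruent to λ! modulo p. In particular it is nonzero modulo p. -/
lemma choose_mul_pow_modEq (p : ℕ) (hp : p.Prime) (l m : ℕ) :
    Nat.choose (m * p ^ l) (p ^ l) ≡ m [MOD p] := by
  haveI : Fact p.Prime := ⟨hp⟩
  have h := Choose.choose_modEq_choose_mul_prod_range_choose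
    (n := m * p ^ l) (k := p ^ l) (p := p) l
  rw [← Int.natCast_modEq_iff]
  have hpos : 0 < p ^ l := pow_pos hp.pos l
  have h1 : m * p ^ l / p ^ l = m := Nat.mul_div_cancel m hpos
  have h2 : p ^ l / p ^ l = 1 := Nat.div_self hpos
  have h3 : ∀ i ∈ Finset.range l,
      Nat.choose (m * p ^ l / p ^ i % p) (p ^ l / p ^ i % p) = 1 := by
    intro i hi
    have hi' : i < l := Finset.mem_range.mp hi
    have : p ^ l / p ^ i = p ^ (l - i) := Nat.pow_div hi'.le hp.pos
    rw [this]
    have hz : p ^ (l - i) % p = 0 :=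
      Nat.eq_zero_of_dvd_of_lt (Nat.dvd_mod_iff (dvd_refl p) |>.mpr
        (dvd_pow_self p (Nat.sub_ne_zero_of_lt hi'))) (Nat.mod_lt _ hp.pos)
    rw [hz, Nat.choose_zero_right]
  rw [h1, h2] at h
  simpa [Finset.prod_congr rfl h3, Nat.choose_one_right] using h

lemma multinomial_range_const (p : ℕ) (hp : p.Prime) (l : ℕ) : ∀ n : ℕ,
    Nat.multinomial (Finset.range n) (fun _ => p ^ l) ≡ Nat.factorial n [MOD p] := by
  intro n
  induction n with
  | zero => simp [Nat.ModEq.refl]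
  | succ n ih =>
    rw [Finset.range_add_one, Nat.multinomial_insert (by simp) _, Nat.factorial_succ]
    have hsum : (p ^ l + ∑ _i ∈ Finset.range n, p ^ l) = (n + 1) * p ^ l := by
      simp [Finset.sum_const, Finset.card_range]; ring
    rw [hsum]
    exact Nat.ModEq.mul (choose_mul_pow_modEq p hp l (n + 1)) ih

/-- for a prime `p`, `l ≥ 0` and `1 ≤ λ ≤ p − 1`, the multinomial
coefficient `(λ p^l)! / ((p^l)!)^λ` is congruent to `λ!` mod `p`; in particular it is
nonzero mod `p`. -/
theorem stmt8 (p : ℕ) (hp : p.Prime) (l lam : ℕ) (h1 : 1 ≤ lam) (h2 : lam ≤ p - 1) :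
    Nat.multinomial Finset.univ (fun _ : Fin lam => p ^ l) ≡ Nat.factorial lam [MOD p] ∧
    ¬ p ∣ Nat.multinomial Finset.univ (fun _ : Fin lam => p ^ l) := by
  have heq : Nat.multinomial Finset.univ (fun _ : Fin lam => p ^ l)
      = Nat.multinomial (Finset.range lam) (fun _ => p ^ l) := by
    simp [Nat.multinomial, Finset.sum_const, Finset.prod_const, Finset.card_univ,
      Finset.card_range]
  have hmod := heq ▸ multinomial_range_const p hp l lam
  refine ⟨hmod, fun hdvd => ?_⟩
  have : p ∣ Nat.factorial lam :=
    Nat.modEq_zero_iff_dvd.mp (hmod.symm.trans (Nat.modEq_zero_iff_dvd.mpr hdvd))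
  exact absurd ((Nat.Prime.dvd_factorial hp).mp this) (by omega)
end

section
/- Every finite set of points in the real affine plane, not all collinear, determines an ordinary line, i.e. a line passing through exactly two of the points (Sylvester–Gallai theorem). -/
noncomputable section SG

/-- cross product of (q-p) and (r-p): zero iff p,q,r collinear. -/
def sgCr (p q r : ℝ × ℝ) : ℝ :=
  (q.1 - p.1) * (r.2 - p.2) - (q.2 - p.2) * (r.1 - p.1)

/-- squared euclidean distance -/
def sgN (p q : ℝ × ℝ) : ℝ := (q.1 - p.1) ^ 2 + (q.2 - p.2) ^ 2

lemma sgN_pos {p q : ℝ × ℝ} (h : p ≠ q) : 0 < sgN p q := by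
  have h' : q.1 - p.1 ≠ 0 ∨ q.2 - p.2 ≠ 0 := by
    by_contra hc
    push_neg at hc
    exact h (Prod.ext (by linarith [hc.1]) (by linarith [hc.2])).symm
  rcases h' with h1 | h1
  · have : 0 < (q.1 - p.1) ^ 2 := by positivity
    have := sq_nonneg (q.2 - p.2)
    unfold sgN; linarith
  · have : 0 < (q.2 - p.2) ^ 2 := by positivity
    have := sq_nonneg (q.1 - p.1)
    unfold sgN; linarith

lemma sgCr_self_left (p r : ℝ × ℝ) : sgCr p p r = 0 := by unfold sgCr; ring

lemma sgCr_ne_left {p q r : ℝ × ℝ} (h : sgCr p q r ≠ 0) : p ≠ q := by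
  intro he; exact h (he ▸ sgCr_self_left p r)

lemma sgCr_of_collinear {p q r : ℝ × ℝ}
    (h : Collinear ℝ ({p, q, r} : Set (ℝ × ℝ))) : sgCr p q r = 0 := by
  obtain ⟨v, hv⟩ := (collinear_iff_of_mem (by simp : p ∈ ({p, q, r} : Set (ℝ × ℝ)))).1 h
  obtain ⟨cq, hq⟩ := hv q (by simp)
  obtain ⟨cr, hr⟩ := hv r (by simp)
  have hq1 : q.1 = cq * v.1 + p.1 := by rw [hq]; simp
  have hq2 : q.2 = cq * v.2 + p.2 := by rw [hq]; simp
  have hr1 : r.1 = cr * v.1 + p.1 := by rw [hr]; simp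
  have hr2 : r.2 = cr * v.2 + p.2 := by rw [hr]; simp
  unfold sgCr
  rw [hq1, hq2, hr1, hr2]; ring

lemma sgCr_coeff {p q r : ℝ × ℝ} (hpq : p ≠ q) (h : sgCr p q r = 0) :
    ∃ c : ℝ, r.1 = c * (q.1 - p.1) + p.1 ∧ r.2 = c * (q.2 - p.2) + p.2 := by
  unfold sgCr at h
  by_cases h1 : q.1 - p.1 = 0
  · have h2 : q.2 - p.2 ≠ 0 := by
      intro h2
      exact hpq (Prod.ext (by linarith) (by linarith)).symm
    refine ⟨(r.2 - p.2) / (q.2 - p.2), ?_, ?_⟩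
    · have h' : (q.2 - p.2) * (r.1 - p.1) = 0 := by
        rw [h1] at h; linarith
      rcases mul_eq_zero.1 h' with hc | hc
      · exact absurd hc h2
      · rw [h1]; linarith

    · field_simp
      ring
  · refine ⟨(r.1 - p.1) / (q.1 - p.1), ?_, ?_⟩
    · field_simp
      ring
    · have : (r.2 - p.2) * (q.1 - p.1) = (r.1 - p.1) * (q.2 - p.2) := by nlinarith [h]
      field_simp
      nlinarith [this]

lemma sg_collinear_of_all {S : Set (ℝ × ℝ)}
    (h : ∀ p ∈ S, ∀ q ∈ S, ∀ r ∈ S, sgCr p q r = 0) : Collinear ℝ S := by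
  rcases S.eq_empty_or_nonempty with rfl | ⟨p, hp⟩
  · exact collinear_empty ℝ _
  by_cases hall : ∀ q ∈ S, q = p
  · exact (collinear_singleton ℝ p).subset (fun x hx => hall x hx)
  push_neg at hall
  obtain ⟨q, hq, hpq'⟩ := hall
  have hpq : p ≠ q := Ne.symm hpq'
  · rw [collinear_iff_of_mem hp]
    refine ⟨q - p, fun r hr => ?_⟩
    obtain ⟨c, hc1, hc2⟩ := sgCr_coeff hpq (h p hp q hq r hr)
    exact ⟨c, Prod.ext (by simpa using hc1) (by simpa using hc2)⟩

/-- the core real-number inequality behind Kelly's proof -/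
lemma sg_core (v1 v2 w1 w2 α β : ℝ) (hC : v1 * w2 - v2 * w1 ≠ 0)
    (hord : (β - α) * (α * (v1 ^ 2 + v2 ^ 2) - (v1 * w1 + v2 * w2)) ≥ 0) :
    ((α - β) * (v1 * w2 - v2 * w1)) ^ 2 * (v1 ^ 2 + v2 ^ 2) <
      (v1 * w2 - v2 * w1) ^ 2 * ((β * v1 - w1) ^ 2 + (β * v2 - w2) ^ 2) := by
  have hM : 0 < v1 ^ 2 + v2 ^ 2 := by
    have hv : v1 ≠ 0 ∨ v2 ≠ 0 := by
      by_contra hc; push_neg at hc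
      exact hC (by rw [hc.1, hc.2]; ring)
    rcases hv with hv | hv
    · have : 0 < v1 ^ 2 := by positivity
      nlinarith [sq_nonneg v2]
    · have : 0 < v2 ^ 2 := by positivity
      nlinarith [sq_nonneg v1]
  set M := v1 ^ 2 + v2 ^ 2 with hMdef
  set P := v1 * w1 + v2 * w2 with hPdef
  set C := v1 * w2 - v2 * w1 with hCdef
  have hC2 : 0 < C ^ 2 := by positivity
  have h2 : 0 ≤ (β - α) * (α * M - P) * M := mul_nonneg hord hM.le
  have step1 : (α - β) ^ 2 * M ^ 2 ≤ (β * M - P) ^ 2 := by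
    nlinarith [sq_nonneg (α * M - P), h2]
  have lag : M * ((β * v1 - w1) ^ 2 + (β * v2 - w2) ^ 2) = (β * M - P) ^ 2 + C ^ 2 := by
    simp only [hMdef, hPdef]
    ring
  have key : ((α - β) * C) ^ 2 * M * M < C ^ 2 * ((β * v1 - w1) ^ 2 + (β * v2 - w2) ^ 2) * M := by
    have : C ^ 2 * ((β * v1 - w1) ^ 2 + (β * v2 - w2) ^ 2) * M
        = C ^ 2 * ((β * M - P) ^ 2 + C ^ 2) := by
      rw [mul_assoc, mul_comm ((β * v1 - w1) ^ 2 + (β * v2 - w2) ^ 2) M, lag]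
    rw [this]
    nlinarith [step1, hC2, sq_nonneg C]
  exact lt_of_mul_lt_mul_right key hM.le

lemma sg_pair (t a b : ℝ) (hab : a ≠ b)
    (h : (t ≤ a ∧ t ≤ b) ∨ (a ≤ t ∧ b ≤ t)) :
    ∃ α β : ℝ, α ∈ ({a, b} : Set ℝ) ∧ β ∈ ({a, b} : Set ℝ) ∧ α ≠ β ∧
      (β - α) * (α - t) ≥ 0 := by
  rcases le_total a b with hle | hle
  · rcases h with ⟨h1, h2⟩ | ⟨h1, h2⟩
    · exact ⟨a, b, by simp, by simp, hab, by nlinarith⟩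
    · exact ⟨b, a, by simp, by simp, (Ne.symm hab), by nlinarith⟩
  · rcases h with ⟨h1, h2⟩ | ⟨h1, h2⟩
    · exact ⟨b, a, by simp, by simp, Ne.symm hab, by nlinarith⟩
    · exact ⟨a, b, by simp, by simp, hab, by nlinarith⟩

lemma sg_pigeon (t x y z : ℝ) (hxy : x ≠ y) (hxz : x ≠ z) (hyz : y ≠ z) :
    ∃ α β : ℝ, α ∈ ({x, y, z} : Set ℝ) ∧ β ∈ ({x, y, z} : Set ℝ) ∧ α ≠ β ∧
      (β - α) * (α - t) ≥ 0 := by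
  have sub : ∀ a b : ℝ, a ∈ ({x,y,z} : Set ℝ) → b ∈ ({x,y,z} : Set ℝ) →
      (∃ α β : ℝ, α ∈ ({a, b} : Set ℝ) ∧ β ∈ ({a, b} : Set ℝ) ∧ α ≠ β ∧
        (β - α) * (α - t) ≥ 0) →
      ∃ α β : ℝ, α ∈ ({x, y, z} : Set ℝ) ∧ β ∈ ({x, y, z} : Set ℝ) ∧ α ≠ β ∧
        (β - α) * (α - t) ≥ 0 := by
    rintro a b ha hb ⟨α, β, hα, hβ, hne, hin⟩
    refine ⟨α, β, ?_, ?_, hne, hin⟩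
    · rcases hα with h | h <;> simp_all
    · rcases hβ with h | h <;> simp_all
  rcases le_total t x with hx | hx <;> rcases le_total t y with hy | hy <;>
    rcases le_total t z with hz | hz
  · exact sub x y (by simp) (by simp) (sg_pair t x y hxy (Or.inl ⟨hx, hy⟩))
  · exact sub x y (by simp) (by simp) (sg_pair t x y hxy (Or.inl ⟨hx, hy⟩))
  · exact sub x z (by simp) (by simp) (sg_pair t x z hxz (Or.inl ⟨hx, hz⟩))
  · exact sub y z (by simp) (by simp) (sg_pair t y z hyz (Or.inr ⟨hy, hz⟩))
  · exact sub y z (by simp) (by simp) (sg_pair t y z hyz (Or.inl ⟨hy, hz⟩))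
  · exact sub x z (by simp) (by simp) (sg_pair t x z hxz (Or.inr ⟨hx, hz⟩))
  · exact sub x y (by simp) (by simp) (sg_pair t x y hxy (Or.inr ⟨hx, hy⟩))
  · exact sub x y (by simp) (by simp) (sg_pair t x y hxy (Or.inr ⟨hx, hy⟩))

/-- Kelly's step: if line pq contains a third point s, we find a strictly closer
point-line pair among the same points. -/
lemma sg_kelly (p q r s : ℝ × ℝ) (hC : sgCr p q r ≠ 0) (hs : sgCr p q s = 0)
    (hsp : s ≠ p) (hsq : s ≠ q) :
    ∃ a b : ℝ × ℝ, a ∈ ({p, q, s} : Set (ℝ × ℝ)) ∧ b ∈ ({p, q, s} : Set (ℝ × ℝ)) ∧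
      sgCr r b a ≠ 0 ∧ (sgCr r b a) ^ 2 / sgN r b < (sgCr p q r) ^ 2 / sgN p q := by
  have hpq : p ≠ q := sgCr_ne_left hC
  set v1 := q.1 - p.1 with hv1
  set v2 := q.2 - p.2 with hv2
  set w1 := r.1 - p.1 with hw1
  set w2 := r.2 - p.2 with hw2
  have hCval : sgCr p q r = v1 * w2 - v2 * w1 := rfl
  obtain ⟨u, hu1, hu2⟩ := sgCr_coeff hpq hs
  have hM : 0 < v1 ^ 2 + v2 ^ 2 := sgN_pos hpq
  -- u ≠ 0 and u ≠ 1
  have hu0 : u ≠ 0 := by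
    intro h0; apply hsp
    exact Prod.ext (by rw [hu1, h0]; ring) (by rw [hu2, h0]; ring)
  have hu1' : u ≠ 1 := by
    intro h0; apply hsq
    exact Prod.ext (by rw [hu1, h0]; simp [hv1]) (by rw [hu2, h0]; simp [hv2])
  set t := (v1 * w1 + v2 * w2) / (v1 ^ 2 + v2 ^ 2) with ht
  obtain ⟨α, β, hα, hβ, hne, hord⟩ := sg_pigeon t 0 1 u (by norm_num) (Ne.symm hu0) (Ne.symm hu1')
  -- translate points
  have hparam : ∀ γ : ℝ, γ ∈ ({(0:ℝ), 1, u} : Set ℝ) →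
      ∃ c : ℝ × ℝ, c ∈ ({p, q, s} : Set (ℝ × ℝ)) ∧
        c.1 = γ * v1 + p.1 ∧ c.2 = γ * v2 + p.2 := by
    rintro γ (rfl | rfl | rfl)
    · exact ⟨p, by simp, by ring, by ring⟩
    · exact ⟨q, by simp, by simp [hv1], by simp [hv2]⟩
    · exact ⟨s, by simp, hu1, hu2⟩
  obtain ⟨a, haS, ha1, ha2⟩ := hparam α hα
  obtain ⟨b, hbS, hb1, hb2⟩ := hparam β hβ
  refine ⟨a, b, haS, hbS, ?_, ?_⟩
  · -- cross of new triple
    have hcr : sgCr r b a = (α - β) * (v1 * w2 - v2 * w1) := by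
      unfold sgCr
      rw [ha1, ha2, hb1, hb2]
      simp only [hv1, hv2, hw1, hw2]
      ring
    rw [hcr]
    exact mul_ne_zero (sub_ne_zero.2 hne) (hCval ▸ hC)
  · have hcr : sgCr r b a = (α - β) * (v1 * w2 - v2 * w1) := by
      unfold sgCr
      rw [ha1, ha2, hb1, hb2]
      simp only [hv1, hv2, hw1, hw2]
      ring
    have hNb : sgN r b = (β * v1 - w1) ^ 2 + (β * v2 - w2) ^ 2 := by
      unfold sgN
      rw [hb1, hb2]
      simp only [hv1, hv2, hw1, hw2]
      ring
    have hNpq : sgN p q = v1 ^ 2 + v2 ^ 2 := rfl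
    have hC' : v1 * w2 - v2 * w1 ≠ 0 := hCval ▸ hC
    have hrb : r ≠ b := by
      intro he
      apply hC'
      have h0 : sgCr r b a = 0 := by rw [← he]; exact sgCr_self_left r a
      rw [hcr] at h0
      rcases mul_eq_zero.1 h0 with h' | h'
      · exact absurd (sub_eq_zero.1 h') hne
      · exact h'
    have hNb_pos : 0 < sgN r b := sgN_pos hrb
    have hord' : (β - α) * (α * (v1 ^ 2 + v2 ^ 2) - (v1 * w1 + v2 * w2)) ≥ 0 := by
      have : (β - α) * (α - t) * (v1 ^ 2 + v2 ^ 2) ≥ 0 := mul_nonneg hord hM.le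
      have heq : (β - α) * (α - t) * (v1 ^ 2 + v2 ^ 2)
          = (β - α) * (α * (v1 ^ 2 + v2 ^ 2) - (v1 * w1 + v2 * w2)) := by
        rw [ht]; field_simp
      linarith [heq ▸ this]
    have hcore := sg_core v1 v2 w1 w2 α β hC' hord'
    have hNb_pos' : 0 < (β * v1 - w1) ^ 2 + (β * v2 - w2) ^ 2 := hNb ▸ hNb_pos
    rw [hcr, hNb, hCval, hNpq, div_lt_div_iff₀ hNb_pos' hM]
    linarith [hcore]

end SG

/-- Sylvester–Gallai: a finite set of points in the real plane, not all
collinear, has an ordinary line: two points of the set such that any point of the set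
collinear with them is one of the two. -/
theorem stmt12 (S : Finset (ℝ × ℝ)) (h : ¬ Collinear ℝ (S : Set (ℝ × ℝ))) :
    ∃ p ∈ S, ∃ q ∈ S, p ≠ q ∧
      ∀ r ∈ S, Collinear ℝ ({p, q, r} : Set (ℝ × ℝ)) → r = p ∨ r = q := by
  classical
  have hex : ∃ m ∈ (S ×ˢ S ×ˢ S).filter
      (fun m : (ℝ × ℝ) × (ℝ × ℝ) × (ℝ × ℝ) => sgCr m.1 m.2.1 m.2.2 ≠ 0), True := by
    by_contra hc
    push_neg at hc
    apply h
    apply sg_collinear_of_all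
    intro p hp q hq r hr
    by_contra hcr
    exact (hc (p, q, r) (Finset.mem_filter.2 ⟨by
      simp only [Finset.mem_product]
      exact ⟨Finset.mem_coe.1 hp, Finset.mem_coe.1 hq, Finset.mem_coe.1 hr⟩, hcr⟩))
  obtain ⟨m0, hm0, -⟩ := hex
  obtain ⟨m, hmT, hmin⟩ := Finset.exists_min_image _
    (fun m : (ℝ × ℝ) × (ℝ × ℝ) × (ℝ × ℝ) => (sgCr m.1 m.2.1 m.2.2) ^ 2 / sgN m.1 m.2.1)
    ⟨m0, hm0⟩
  obtain ⟨hmS, hmcr⟩ := Finset.mem_filter.1 hmT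
  simp only [Finset.mem_product] at hmS
  obtain ⟨hpS, hqS, hrS⟩ := hmS
  set p := m.1
  set q := m.2.1
  set r := m.2.2
  refine ⟨p, hpS, q, hqS, sgCr_ne_left hmcr, ?_⟩
  intro s hsS hcol
  by_contra hne
  push_neg at hne
  obtain ⟨hsp, hsq⟩ := hne
  have hcrs : sgCr p q s = 0 := sgCr_of_collinear hcol
  obtain ⟨a, b, haS, hbS, hab_ne, hab_lt⟩ := sg_kelly p q r s hmcr hcrs hsp hsq
  have haS' : a ∈ S := by
    rcases haS with rfl | rfl | rfl
    exacts [hpS, hqS, hsS]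
  have hbS' : b ∈ S := by
    rcases hbS with rfl | rfl | rfl
    exacts [hpS, hqS, hsS]
  have hmem : (r, b, a) ∈ (S ×ˢ S ×ˢ S).filter
      (fun m : (ℝ × ℝ) × (ℝ × ℝ) × (ℝ × ℝ) => sgCr m.1 m.2.1 m.2.2 ≠ 0) :=
    Finset.mem_filter.2 ⟨by simp [Finset.mem_product, hrS, haS', hbS'], hab_ne⟩
  have := hmin (r, b, a) hmem
  simp only at this
  linarith [hab_lt]
end
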